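/- arXiv:1607.00086 — 2 statements merged into one kernel-verified Lean document; each statement's English description precedes it below -/
import Mathlib

section
/- Let (W,S) be a Coxeter system and define Ξ = {(I, w, J) : I, J ⊆ S, w ∈ ᴵWᴶ}, partially ordered by (I,w,J) ≤ (I',w',J') iff I ⊇ I', J ⊇ J', and W_I w W_J ⊇ W_{I'} w' W_{J'}. Then for each face F = (I,w,J), the lower interval {G ∈ Ξ : G ≤ F} is order-isomorphic to the boolean lattice of subsets of (S−I) × (S−J) (i.e., to the product of the powersets of S−I and of S−J ordered by inclusion). -/
open CoxeterSystem

variable {B W : Type*} [Group W] {M : CoxeterMatrix B}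

/-- The standard parabolic subgroup `W_I` generated by the simple reflections indexed by `I`. -/
def CoxeterSystem.parab (cs : CoxeterSystem M W) (I : Set B) : Subgroup W :=
  Subgroup.closure (cs.simple '' I)

/-- The parabolic double coset `W_I w W_J`. -/
def CoxeterSystem.doset (cs : CoxeterSystem M W) (I : Set B) (w : W) (J : Set B) : Set W :=
  {x | ∃ a ∈ cs.parab I, ∃ b ∈ cs.parab J, x = a * w * b}

/-- `w` is a minimal-length double coset representative for `W_I \ W / W_J`:
`Des_L(w) ⊆ S − I` and `Des_R(w) ⊆ S − J`. -/
def CoxeterSystem.isMinRep (cs : CoxeterSystem M W) (I : Set B) (w : W) (J : Set B) : Prop :=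
  (∀ i ∈ I, ¬ cs.IsLeftDescent w i) ∧ (∀ j ∈ J, ¬ cs.IsRightDescent w j)

/-- Membership in the two-sided Coxeter complex `Ξ`: a triple `(I, w, J)` with
`w ∈ ᴵWᴶ` a minimal-length double coset representative. -/
def CoxeterSystem.inXi (cs : CoxeterSystem M W) (F : Set B × W × Set B) : Prop :=
  cs.isMinRep F.1 F.2.1 F.2.2

/-- The partial order on `Ξ`: `(I,w,J) ≤ (I',w',J')` iff `I ⊇ I'`, `J ⊇ J'`, and
`W_I w W_J ⊇ W_{I'} w' W_{J'}`. -/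
def CoxeterSystem.xiLE (cs : CoxeterSystem M W) (F G : Set B × W × Set B) : Prop :=
  G.1 ⊆ F.1 ∧ G.2.2 ⊆ F.2.2 ∧
    cs.doset G.1 G.2.1 G.2.2 ⊆ cs.doset F.1 F.2.1 F.2.2

set_option linter.unusedSectionVars false

namespace CoxAux

open List

variable (cs : CoxeterSystem M W)

local prefix:100 "s" => cs.simple
local prefix:100 "π" => cs.wordProd
local prefix:100 "ℓ" => cs.length
local prefix:100 "ris" => cs.rightInvSeq
local prefix:100 "lis" => cs.leftInvSeq

/-- Indicator function in `ZMod 2`. -/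
noncomputable def dd (t z : W) : ZMod 2 := by classical exact if t = z then 1 else 0

lemma dd_eq_one {t z : W} (h : t = z) : dd t z = 1 := by simp [dd, h]

lemma dd_eq_zero {t z : W} (h : t ≠ z) : dd t z = 0 := by simp [dd, h]

lemma dd_iff {t₁ z₁ t₂ z₂ : W} (h : (t₁ = z₁) ↔ (t₂ = z₂)) : dd t₁ z₁ = dd t₂ z₂ := by
  by_cases h1 : t₁ = z₁
  · rw [dd_eq_one h1, dd_eq_one (h.mp h1)]
  · rw [dd_eq_zero h1, dd_eq_zero (fun h2 => h1 (h.mpr h2))]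

lemma dd_conj (u v t z : W) : dd (u * t * v) z = dd t (u⁻¹ * z * v⁻¹) := by
  refine dd_iff ?_
  constructor
  · rintro rfl; group
  · intro h; rw [h]; group

lemma dd_add_self (t z : W) : dd t z + dd t z = 0 := CharTwo.add_self_eq_zero _

lemma simple_conj_conj (i : B) (t : W) : s i * (s i * t * s i) * s i = t := by
  rw [show s i * t * s i = s i * (t * s i) from by group,
    cs.simple_mul_simple_cancel_left, cs.simple_mul_simple_cancel_right]

lemma simple_conj_eq_self_iff (i : B) (t : W) : s i * t * s i = s i ↔ t = s i := by
  constructor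
  · intro h
    have h2 := congrArg (fun x => s i * x * s i) h
    rw [simple_conj_conj] at h2
    rw [h2, show s i * s i * s i = (s i * s i) * s i from rfl,
      cs.simple_mul_simple_self, one_mul]
  · rintro rfl
    rw [cs.simple_mul_simple_self, one_mul]

/-- The parity permutation attached to a simple reflection. -/
noncomputable def eta (i : B) : Equiv.Perm (W × ZMod 2) :=
  Function.Involutive.toPerm (fun p => (s i * p.1 * s i, p.2 + dd p.1 (s i))) (by
    rintro ⟨t, e⟩
    simp only [Prod.mk.injEq]
    refine ⟨simple_conj_conj cs i t, ?_⟩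
    rw [dd_iff (t₂ := t) (z₂ := s i) (simple_conj_eq_self_iff cs i t),
      add_assoc, dd_add_self, add_zero])

lemma eta_apply (i : B) (t : W) (e : ZMod 2) :
    eta cs i (t, e) = (s i * t * s i, e + dd t (s i)) := rfl

/-- The test sequence for the braid relation. -/
noncomputable def zeta (i j : B) (l : ℕ) : W := ((s i * s j) ^ l)⁻¹ * s j

lemma liftable : M.IsLiftable (fun i => eta cs i) := by
  intro i j
  set m := M i j with hm
  set c := s i * s j with hc
  have hcm : c ^ m = 1 := cs.simple_mul_simple_pow i j
  have hcinv : c⁻¹ = s j * s i := by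
    rw [hc, mul_inv_rev, cs.inv_simple, cs.inv_simple]
  have hsc : s j * c = c⁻¹ * s j := by rw [hcinv, hc]; group
  have hzeta2 : ∀ l, c⁻¹ * zeta cs i j l * c = zeta cs i j (l + 2) := by
    intro l
    unfold zeta
    rw [← hc]
    have h1 : c⁻¹ * (c ^ l)⁻¹ = (c ^ (l + 1))⁻¹ := by rw [pow_succ]; group
    have h2 : (c ^ (l + 1))⁻¹ * c⁻¹ = (c ^ (l + 2))⁻¹ := by
      rw [pow_succ c (l + 1)]; group
    calc c⁻¹ * ((c ^ l)⁻¹ * s j) * c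
        = (c⁻¹ * (c ^ l)⁻¹) * (s j * c) := by group
      _ = (c ^ (l + 1))⁻¹ * (c⁻¹ * s j) := by rw [h1, hsc]
      _ = (c ^ (l + 2))⁻¹ * s j := by rw [← mul_assoc, h2]
  have hzeta0 : zeta cs i j 0 = s j := by unfold zeta; rw [← hc]; simp
  have hzeta1 : zeta cs i j 1 = s j * s i * s j := by
    unfold zeta; rw [← hc, pow_one, hcinv]
  have g_apply : ∀ t e, (eta cs i * eta cs j) (t, e) =
      (c * t * c⁻¹, e + (dd t (zeta cs i j 0) + dd t (zeta cs i j 1))) := by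
    intro t e
    rw [show (eta cs i * eta cs j) (t, e) = eta cs i (eta cs j (t, e)) from rfl,
      eta_apply, eta_apply]
    refine Prod.ext ?_ ?_
    · show s i * (s j * t * s j) * s i = c * t * c⁻¹
      rw [hc, hcinv]; group
    · show e + dd t (s j) + dd (s j * t * s j) (s i) = _
      rw [dd_conj]
      rw [show (s j)⁻¹ * s i * (s j)⁻¹ = zeta cs i j 1 from by
        rw [cs.inv_simple, hzeta1]]
      rw [hzeta0, add_assoc]
  have g_pow : ∀ n t e, ((eta cs i * eta cs j) ^ n) (t, e) =
      (c ^ n * t * (c ^ n)⁻¹, e + ∑ l ∈ Finset.range (2 * n), dd t (zeta cs i j l)) := by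
    intro n
    induction n with
    | zero =>
      intro t e
      simp only [pow_zero, Equiv.Perm.coe_one, id_eq, Finset.range_zero, Finset.sum_empty,
        add_zero, mul_zero]
      refine Prod.ext ?_ rfl
      show t = 1 * t * 1⁻¹
      group
    | succ n ihn =>
      intro t e
      rw [pow_succ, Equiv.Perm.mul_apply, g_apply, ihn]
      refine Prod.ext ?_ ?_
      · show c ^ n * (c * t * c⁻¹) * (c ^ n)⁻¹ = c ^ (n + 1) * t * (c ^ (n + 1))⁻¹
        rw [pow_succ']
        group
      · show (e + (dd t (zeta cs i j 0) + dd t (zeta cs i j 1))) +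
            ∑ l ∈ Finset.range (2 * n), dd (c * t * c⁻¹) (zeta cs i j l) = _
        have hterm : ∑ l ∈ Finset.range (2 * n), dd (c * t * c⁻¹) (zeta cs i j l)
            = ∑ l ∈ Finset.range (2 * n), dd t (zeta cs i j (l + 1 + 1)) := by
          refine Finset.sum_congr rfl (fun l _ => ?_)
          rw [dd_conj, inv_inv, hzeta2]
        have hsplit : ∑ l ∈ Finset.range (2 * (n + 1)), dd t (zeta cs i j l) =
            ((∑ l ∈ Finset.range (2 * n), dd t (zeta cs i j (l + 1 + 1))) +
              dd t (zeta cs i j (0 + 1))) + dd t (zeta cs i j 0) := by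
          rw [show 2 * (n + 1) = 2 * n + 1 + 1 from by ring, Finset.sum_range_succ',
            Finset.sum_range_succ']
        rw [hterm, hsplit, show (0 : ℕ) + 1 = 1 from rfl]
        exact (by intro a b c d; ring : ∀ (a b c d : ZMod 2), a + (b + c) + d = a + (d + c + b)) e _ _ _
  show ((eta cs i * eta cs j) ^ m) = 1
  apply Equiv.ext
  rintro ⟨t, e⟩
  rw [g_pow m t e, hcm]
  have hsum : ∑ l ∈ Finset.range (2 * m), dd t (zeta cs i j l) = 0 := by
    have hper : ∀ l, zeta cs i j (m + l) = zeta cs i j l := by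
      intro l
      unfold zeta
      rw [← hc, pow_add, hcm, one_mul]
    rw [two_mul, Finset.sum_range_add]
    have h2 : ∑ l ∈ Finset.range m, dd t (zeta cs i j (m + l))
        = ∑ l ∈ Finset.range m, dd t (zeta cs i j l) :=
      Finset.sum_congr rfl (fun l _ => by rw [hper l])
    rw [h2, CharTwo.add_self_eq_zero]
  rw [hsum, add_zero]
  show ((1 : W) * t * 1⁻¹, e) = _
  rw [show (1 : W) * t * 1⁻¹ = t from by group]
  rfl

/-- The parity representation `W →* Perm (W × ZMod 2)`. -/
noncomputable def phi : W →* Equiv.Perm (W × ZMod 2) :=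
  cs.lift ⟨fun i => eta cs i, liftable cs⟩

lemma phi_simple (i : B) : phi cs (s i) = eta cs i :=
  cs.lift_apply_simple (liftable cs) i

lemma phi_wordProd (ω : List B) (t : W) (e : ZMod 2) :
    phi cs (π ω) (t, e) = (π ω * t * (π ω)⁻¹, e + ((ris ω).map (fun z => dd t z)).sum) := by
  induction ω generalizing t e with
  | nil =>
    simp only [cs.wordProd_nil, map_one, Equiv.Perm.coe_one, id_eq,
      CoxeterSystem.rightInvSeq_nil, List.map_nil, List.sum_nil, add_zero]
    refine Prod.ext ?_ rfl
    show t = 1 * t * 1⁻¹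
    group
  | cons i ω ih =>
    rw [cs.wordProd_cons, map_mul, Equiv.Perm.mul_apply, ih, phi_simple, eta_apply]
    have hris : ris (i :: ω) = ((π ω)⁻¹ * s i * π ω) :: ris ω := rfl
    rw [hris]
    refine Prod.ext ?_ ?_
    · show s i * (π ω * t * (π ω)⁻¹) * s i = (s i * π ω) * t * (s i * π ω)⁻¹
      rw [mul_inv_rev, cs.inv_simple]
      group
    · show e + ((ris ω).map (fun z => dd t z)).sum + dd (π ω * t * (π ω)⁻¹) (s i) = _
      rw [dd_conj, inv_inv, List.map_cons, List.sum_cons]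
      ring

lemma parity_eq {ω ω' : List B} (h : π ω = π ω') (t : W) :
    ((ris ω).map (fun z => dd t z)).sum = ((ris ω').map (fun z => dd t z)).sum := by
  have h1 := phi_wordProd cs ω t 0
  have h2 := phi_wordProd cs ω' t 0
  rw [h] at h1
  have := h1.symm.trans h2
  have h3 := congrArg Prod.snd this
  simpa using h3

lemma sum_dd_of_not_mem {L : List W} {t : W} (h : t ∉ L) :
    (L.map (fun z => dd t z)).sum = 0 := by
  induction L with
  | nil => simp
  | cons z L ih =>
    rw [List.map_cons, List.sum_cons,
      dd_eq_zero (fun h2 => h (by rw [h2]; exact List.mem_cons_self)), zero_add]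
    exact ih (fun h2 => h (List.mem_cons_of_mem z h2))

lemma sum_dd_of_nodup_mem {L : List W} {t : W} (hnd : L.Nodup) (h : t ∈ L) :
    (L.map (fun z => dd t z)).sum = 1 := by
  induction L with
  | nil => simp at h
  | cons z L ih =>
    rw [List.map_cons, List.sum_cons]
    rcases List.mem_cons.mp h with rfl | hmem
    · rw [dd_eq_one rfl, sum_dd_of_not_mem (List.nodup_cons.mp hnd).1, add_zero]
    · have hne : t ≠ z := fun h2 => (List.nodup_cons.mp hnd).1 (by rw [← h2]; exact hmem)
      rw [dd_eq_zero hne, zero_add]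
      exact ih (List.nodup_cons.mp hnd).2 hmem

lemma mem_rightInvSeq_of_isRightDescent (ω : List B) (j : B)
    (h : cs.IsRightDescent (π ω) j) : s j ∈ ris ω := by
  obtain ⟨ωu, hred, hu⟩ := cs.exists_reduced_word' (π ω * s j)
  have hΩ : π (ωu ++ [j]) = π ω := by
    rw [cs.wordProd_append, cs.wordProd_singleton, ← hu,
      cs.simple_mul_simple_cancel_right]
  have hlen : ℓ (π ω * s j) + 1 = ℓ (π ω) := cs.isRightDescent_iff.mp h
  have hredΩ : cs.IsReduced (ωu ++ [j]) := by
    unfold CoxeterSystem.IsReduced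
    rw [hΩ, List.length_append, List.length_singleton]
    have h2 : ℓ (π ωu) = ωu.length := hred
    rw [← hlen, hu, h2]
  have hmem : s j ∈ ris (ωu ++ [j]) := by
    rw [← List.concat_eq_append, cs.rightInvSeq_concat]
    rw [List.concat_eq_append]
    exact List.mem_append_right _ (List.mem_singleton_self _)
  have h1 : ((ris (ωu ++ [j])).map (fun z => dd (s j) z)).sum = 1 :=
    sum_dd_of_nodup_mem (hredΩ.nodup_rightInvSeq) hmem
  by_contra hnot
  have h0 : ((ris ω).map (fun z => dd (s j) z)).sum = 0 := sum_dd_of_not_mem hnot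
  rw [parity_eq cs hΩ (s j), h0] at h1
  exact one_ne_zero h1.symm

lemma exchange_right (ω : List B) (j : B) (h : cs.IsRightDescent (π ω) j) :
    ∃ k, k < ω.length ∧ π (ω.eraseIdx k) = π ω * s j := by
  have hmem := mem_rightInvSeq_of_isRightDescent cs ω j h
  obtain ⟨k, hk, hget⟩ := List.mem_iff_getElem.mp hmem
  rw [cs.length_rightInvSeq] at hk
  refine ⟨k, hk, ?_⟩
  have hgetD : (ris ω).getD k 1 = s j := by
    rw [List.getD_eq_getElem _ 1 (by rw [cs.length_rightInvSeq]; exact hk)]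
    exact hget
  rw [← cs.wordProd_mul_getD_rightInvSeq, hgetD]

lemma exchange_left (ω : List B) (i : B) (h : cs.IsLeftDescent (π ω) i) :
    ∃ k, k < ω.length ∧ π (ω.eraseIdx k) = s i * π ω := by
  have hrev : cs.IsRightDescent (π ω.reverse) i := by
    rw [cs.wordProd_reverse]
    exact cs.isRightDescent_inv_iff.mpr h
  have hmem := mem_rightInvSeq_of_isRightDescent cs ω.reverse i hrev
  rw [cs.rightInvSeq_reverse, List.mem_reverse] at hmem
  obtain ⟨k, hk, hget⟩ := List.mem_iff_getElem.mp hmem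
  rw [cs.length_leftInvSeq] at hk
  refine ⟨k, hk, ?_⟩
  have hgetD : (lis ω).getD k 1 = s i := by
    rw [List.getD_eq_getElem _ 1 (by rw [cs.length_leftInvSeq]; exact hk)]
    exact hget
  rw [← cs.getD_leftInvSeq_mul_wordProd, hgetD]

/-! ### Parabolic subgroups and double cosets -/

lemma wordProd_mem_parab {I : Set B} {l : List B} (h : ∀ b ∈ l, b ∈ I) :
    π l ∈ cs.parab I := by
  induction l with
  | nil => rw [cs.wordProd_nil]; exact one_mem _
  | cons i l ih =>
    rw [cs.wordProd_cons]
    exact mul_mem (Subgroup.subset_closure ⟨i, h i (List.mem_cons_self), rfl⟩)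
      (ih (fun b hb => h b (List.mem_cons_of_mem i hb)))

lemma simple_mem_parab {I : Set B} {i : B} (h : i ∈ I) : s i ∈ cs.parab I :=
  Subgroup.subset_closure ⟨i, h, rfl⟩

/-- The subgroup of products of words with letters in `I`. -/
def wordSubgroup (I : Set B) : Subgroup W where
  carrier := {a | ∃ l : List B, (∀ b ∈ l, b ∈ I) ∧ π l = a}
  one_mem' := ⟨[], by simp, cs.wordProd_nil⟩
  mul_mem' := by
    rintro a a' ⟨l, hl, rfl⟩ ⟨l', hl', rfl⟩
    exact ⟨l ++ l', fun b hb => (List.mem_append.mp hb).elim (hl b) (hl' b),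
      cs.wordProd_append l l'⟩
  inv_mem' := by
    rintro a ⟨l, hl, rfl⟩
    exact ⟨l.reverse, fun b hb => hl b (List.mem_reverse.mp hb), cs.wordProd_reverse l⟩

lemma parab_eq_wordSubgroup (I : Set B) : cs.parab I = wordSubgroup cs I := by
  apply _root_.le_antisymm
  · apply (Subgroup.closure_le _).mpr
    rintro x ⟨i, hi, rfl⟩
    exact ⟨[i], by simpa using hi, cs.wordProd_singleton i⟩
  · rintro a ⟨l, hl, rfl⟩
    exact wordProd_mem_parab cs hl

lemma exists_word_of_mem_parab {I : Set B} {a : W} (h : a ∈ cs.parab I) :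
    ∃ l : List B, (∀ b ∈ l, b ∈ I) ∧ π l = a := by
  rw [parab_eq_wordSubgroup] at h
  exact h

lemma parab_mono {I I' : Set B} (h : I ⊆ I') : cs.parab I ≤ cs.parab I' :=
  Subgroup.closure_mono (Set.image_mono h)

lemma mem_doset_self (I : Set B) (w : W) (J : Set B) : w ∈ cs.doset I w J :=
  ⟨1, one_mem _, 1, one_mem _, by group⟩

lemma doset_eq_of_mem {I J : Set B} {w x : W} (h : x ∈ cs.doset I w J) :
    cs.doset I x J = cs.doset I w J := by
  obtain ⟨a, ha, b, hb, rfl⟩ := h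
  ext z
  constructor
  · rintro ⟨a', ha', b', hb', rfl⟩
    exact ⟨a' * a, mul_mem ha' ha, b * b', mul_mem hb hb', by group⟩
  · rintro ⟨a', ha', b', hb', rfl⟩
    exact ⟨a' * a⁻¹, mul_mem ha' (inv_mem ha), b⁻¹ * b', mul_mem (inv_mem hb) hb', by group⟩

lemma doset_mono {I I' J J' : Set B} (hI : I ⊆ I') (hJ : J ⊆ J') (w : W) :
    cs.doset I w J ⊆ cs.doset I' w J' := by
  rintro z ⟨a, ha, b, hb, rfl⟩
  exact ⟨a, parab_mono cs hI ha, b, parab_mono cs hJ hb, rfl⟩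

/-- Existence of minimal length representatives. -/
lemma exists_minRep (I : Set B) (w : W) (J : Set B) :
    ∃ x, x ∈ cs.doset I w J ∧ cs.isMinRep I x J ∧ ∀ z ∈ cs.doset I w J, ℓ x ≤ ℓ z := by
  have hne : ((fun z => ℓ z) '' (cs.doset I w J)).Nonempty :=
    ⟨ℓ w, w, mem_doset_self cs I w J, rfl⟩
  obtain ⟨x, hxD, hxl⟩ := Nat.sInf_mem hne
  have hxl' : ℓ x = sInf ((fun z => ℓ z) '' cs.doset I w J) := hxl
  have hmin : ∀ z ∈ cs.doset I w J, ℓ x ≤ ℓ z := by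
    intro z hz
    rw [hxl']
    exact Nat.sInf_le ⟨z, hz, rfl⟩
  refine ⟨x, hxD, ⟨?_, ?_⟩, hmin⟩
  · intro i hi hdesc
    have hmem : s i * x ∈ cs.doset I w J := by
      obtain ⟨a, ha, b, hb, rfl⟩ := hxD
      exact ⟨s i * a, mul_mem (simple_mem_parab cs hi) ha, b, hb, by group⟩
    have := hmin _ hmem
    exact absurd hdesc (by unfold CoxeterSystem.IsLeftDescent; omega)
  · intro j hj hdesc
    have hmem : x * s j ∈ cs.doset I w J := by
      obtain ⟨a, ha, b, hb, rfl⟩ := hxD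
      exact ⟨a, ha, b * s j, mul_mem hb (simple_mem_parab cs hj), by group⟩
    have := hmin _ hmem
    exact absurd hdesc (by unfold CoxeterSystem.IsRightDescent; omega)

/-- Key uniqueness induction: an element satisfying the descent conditions that lies in the
double coset of a minimal-length element `x` must equal `x`. -/
lemma minRep_unique_aux (n : ℕ) : ∀ (I J : Set B) (x y : W) (la lb : List B),
    la.length + lb.length ≤ n → (∀ b ∈ la, b ∈ I) → (∀ b ∈ lb, b ∈ J) →
    (∀ z ∈ cs.doset I x J, ℓ x ≤ ℓ z) → cs.isMinRep I y J →
    y = π la * x * π lb → y = x := by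
  induction n with
  | zero =>
    intro I J x y la lb hlen hla hlb hmin hy heq
    have h1 : la = [] := List.length_eq_zero_iff.mp (by omega)
    have h2 : lb = [] := List.length_eq_zero_iff.mp (by omega)
    subst h1; subst h2
    simpa using heq
  | succ n ih =>
    intro I J x y la lb hlen hla hlb hmin hy heq
    obtain ⟨ωx, hredx, hxw⟩ := cs.exists_reduced_word' x
    rcases List.eq_nil_or_concat' lb with rfl | ⟨l', j, rfl⟩
    · -- lb = []
      rcases la with _ | ⟨i, l''⟩
      · simpa using heq
      · have hi : i ∈ I := hla i (List.mem_cons_self)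
        have heq' : y = s i * (π l'' * x) := by
          rw [heq, cs.wordProd_cons, cs.wordProd_nil]
          group
        have hnd : ¬ cs.IsLeftDescent y i := hy.1 i hi
        have h2 : s i * y = π l'' * x := by
          rw [heq', cs.simple_mul_simple_cancel_left]
        have h3 : ℓ (s i * y) = ℓ y + 1 := cs.not_isLeftDescent_iff.mp hnd
        have hld : cs.IsLeftDescent (π l'' * x) i := by
          unfold CoxeterSystem.IsLeftDescent
          rw [← h2, cs.simple_mul_simple_cancel_left]
          omega
        have hW : π l'' * x = π (l'' ++ ωx) := by rw [cs.wordProd_append, hxw]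
        rw [hW] at hld
        obtain ⟨k, hk, hke⟩ := exchange_left cs (l'' ++ ωx) i hld
        rw [← hW, ← heq'] at hke
        by_cases hcase : k < l''.length
        · rw [List.eraseIdx_append_of_lt_length hcase] at hke
          rw [cs.wordProd_append, ← hxw] at hke
          refine ih I J x y (l''.eraseIdx k) [] ?_ ?_ (by simp) hmin hy ?_
          · have := List.length_eraseIdx_add_one hcase
            simp only [List.length_cons, List.length_nil] at hlen ⊢
            omega
          · intro b hb
            exact hla b (List.mem_cons_of_mem i (List.mem_of_mem_eraseIdx hb))
          · rw [cs.wordProd_nil, mul_one, ← hke]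
        · push_neg at hcase
          rw [List.eraseIdx_append_of_length_le hcase] at hke
          set k' := k - l''.length with hk'
          have hk'lt : k' < ωx.length := by
            rw [List.length_append] at hk
            omega
          rw [cs.wordProd_append] at hke
          -- hke : π l'' * π (ωx.eraseIdx k') = y
          set x'' := π (ωx.eraseIdx k') with hx''
          have hx''eq : x'' = ((π l'')⁻¹ * s i * π l'') * x := by
            have : π l'' * x'' = s i * (π l'' * x) := by rw [hke, heq']
            calc x'' = (π l'')⁻¹ * (π l'' * x'') := by group
              _ = (π l'')⁻¹ * (s i * (π l'' * x)) := by rw [this]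
              _ = ((π l'')⁻¹ * s i * π l'') * x := by group
          have hl''I : ∀ b ∈ l'', b ∈ I := fun b hb => hla b (List.mem_cons_of_mem i hb)
          have hx''mem : x'' ∈ cs.doset I x J := by
            refine ⟨(π l'')⁻¹ * s i * π l'',
              mul_mem (mul_mem (inv_mem (wordProd_mem_parab cs hl''I))
                (simple_mem_parab cs hi)) (wordProd_mem_parab cs hl''I),
              1, one_mem _, by rw [hx''eq]; group⟩
          have hlen1 : ℓ x'' ≤ (ωx.eraseIdx k').length := cs.length_wordProd_le _
          have hlen2 : (ωx.eraseIdx k').length + 1 = ωx.length :=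
            List.length_eraseIdx_add_one hk'lt
          have hlen3 : ℓ x = ωx.length := by rw [hxw]; exact hredx
          have := hmin x'' hx''mem
          omega
    · -- lb = l' ++ [j]
      have hj : j ∈ J := hlb j (List.mem_append_right l' (List.mem_singleton_self j))
      have heq' : y = (π la * x * π l') * s j := by
        rw [heq, cs.wordProd_append, cs.wordProd_singleton]
        group
      have hnd : ¬ cs.IsRightDescent y j := hy.2 j hj
      have h2 : y * s j = π la * x * π l' := by
        rw [heq', cs.simple_mul_simple_cancel_right]
      have h3 : ℓ (y * s j) = ℓ y + 1 := cs.not_isRightDescent_iff.mp hnd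
      have hrd : cs.IsRightDescent (π la * x * π l') j := by
        unfold CoxeterSystem.IsRightDescent
        rw [← h2, cs.simple_mul_simple_cancel_right]
        omega
      have hW : π la * x * π l' = π (la ++ (ωx ++ l')) := by
        rw [cs.wordProd_append, cs.wordProd_append, hxw]
        group
      rw [hW] at hrd
      obtain ⟨k, hk, hke⟩ := exchange_right cs (la ++ (ωx ++ l')) j hrd
      rw [← hW, ← heq'] at hke
      by_cases hc1 : k < la.length
      · rw [List.eraseIdx_append_of_lt_length hc1] at hke
        rw [cs.wordProd_append, cs.wordProd_append, ← hxw, ← mul_assoc] at hke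
        refine ih I J x y (la.eraseIdx k) l' ?_ ?_ ?_ hmin hy hke.symm
        · have := List.length_eraseIdx_add_one hc1
          rw [List.length_append, List.length_singleton] at hlen
          omega
        · intro b hb
          exact hla b (List.mem_of_mem_eraseIdx hb)
        · intro b hb
          exact hlb b (List.mem_append_left [j] hb)
      · push_neg at hc1
        rw [List.eraseIdx_append_of_length_le hc1] at hke
        set k₂ := k - la.length with hk₂
        by_cases hc3 : k₂ < ωx.length
        · rw [List.eraseIdx_append_of_lt_length hc3] at hke
          rw [cs.wordProd_append, cs.wordProd_append] at hke
          set x'' := π (ωx.eraseIdx k₂) with hx''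
          -- hke : π la * (x'' * π l') = y
          have hx''eq : x'' = x * (π l' * s j * (π l')⁻¹) := by
            have h5 : π la * (x'' * π l') = π la * x * π l' * s j := by rw [hke, heq']
            have h6 : x'' * π l' = x * π l' * s j := by
              have := mul_left_cancel (a := π la)
                (by rw [h5]; group : π la * (x'' * π l') = π la * (x * π l' * s j))
              rw [this]
            calc x'' = (x'' * π l') * (π l')⁻¹ := by group
              _ = (x * π l' * s j) * (π l')⁻¹ := by rw [h6]
              _ = x * (π l' * s j * (π l')⁻¹) := by group
          have hl'J : ∀ b ∈ l', b ∈ J := fun b hb => hlb b (List.mem_append_left [j] hb)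
          have hx''mem : x'' ∈ cs.doset I x J := by
            refine ⟨1, one_mem _, π l' * s j * (π l')⁻¹,
              mul_mem (mul_mem (wordProd_mem_parab cs hl'J) (simple_mem_parab cs hj))
                (inv_mem (wordProd_mem_parab cs hl'J)),
              by rw [hx''eq]; group⟩
          have hlen1 : ℓ x'' ≤ (ωx.eraseIdx k₂).length := cs.length_wordProd_le _
          have hlen2 : (ωx.eraseIdx k₂).length + 1 = ωx.length :=
            List.length_eraseIdx_add_one hc3
          have hlen3 : ℓ x = ωx.length := by rw [hxw]; exact hredx
          have := hmin x'' hx''mem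
          omega
        · push_neg at hc3
          rw [List.eraseIdx_append_of_length_le hc3] at hke
          rw [cs.wordProd_append, cs.wordProd_append, ← hxw, ← mul_assoc] at hke
          refine ih I J x y la (l'.eraseIdx (k₂ - ωx.length)) ?_ hla ?_ hmin hy hke.symm
          · have hklt : k₂ - ωx.length < l'.length := by
              rw [List.length_append, List.length_append] at hk
              omega
            have := List.length_eraseIdx_add_one hklt
            rw [List.length_append, List.length_singleton] at hlen
            omega
          · intro b hb
            exact hlb b (List.mem_append_left [j] (List.mem_of_mem_eraseIdx hb))

/-- Uniqueness of the minimal double coset representative. -/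
lemma minRep_unique {I J : Set B} {y₁ y₂ : W} (h1 : cs.isMinRep I y₁ J)
    (h2 : cs.isMinRep I y₂ J) (hd : y₂ ∈ cs.doset I y₁ J) : y₁ = y₂ := by
  obtain ⟨x, hxD, hxrep, hxmin⟩ := exists_minRep cs I y₁ J
  have hDx : cs.doset I x J = cs.doset I y₁ J := doset_eq_of_mem cs hxD
  have key : ∀ y, cs.isMinRep I y J → y ∈ cs.doset I y₁ J → y = x := by
    intro y hr hm
    rw [← hDx] at hm
    obtain ⟨a, ha, b, hb, rfl⟩ := hm
    obtain ⟨la, hla, hpa⟩ := exists_word_of_mem_parab cs ha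
    obtain ⟨lb, hlb, hpb⟩ := exists_word_of_mem_parab cs hb
    refine minRep_unique_aux cs (la.length + lb.length) I J x (a * x * b) la lb le_rfl
      hla hlb (fun z hz => hxmin z (hDx ▸ hz)) hr ?_
    rw [hpa, hpb]
  rw [key y₁ h1 (mem_doset_self cs I y₁ J), key y₂ h2 hd]

end CoxAux

/-- For each face `F = (I,w,J)` of the two-sided Coxeter complex `Ξ`,
the lower interval `{G ∈ Ξ : G ≤ F}` is order-isomorphic to the product of the powersets
of `S − I` and of `S − J`, ordered by inclusion. -/
theorem xi_lower_interval_boolean (cs : CoxeterSystem M W) (F : Set B × W × Set B)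
    (hF : cs.inXi F) :
    ∃ e : {G : Set B × W × Set B // cs.inXi G ∧ cs.xiLE G F} ≃
        (Set (↥(F.1ᶜ)) × Set (↥(F.2.2ᶜ))),
      ∀ G₁ G₂ : {G : Set B × W × Set B // cs.inXi G ∧ cs.xiLE G F},
        cs.xiLE G₁.1 G₂.1 ↔ e G₁ ≤ e G₂ := by
  classical
  set w : W := F.2.1 with hw
  set f : {G : Set B × W × Set B // cs.inXi G ∧ cs.xiLE G F} →
      (Set (↥(F.1ᶜ)) × Set (↥(F.2.2ᶜ))) :=
    fun G => ({b : ↥(F.1ᶜ) | (b : B) ∉ G.1.1}, {b : ↥(F.2.2ᶜ) | (b : B) ∉ G.1.2.2}) with hf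
  have hdos : ∀ G : {G : Set B × W × Set B // cs.inXi G ∧ cs.xiLE G F},
      cs.doset G.1.1 w G.1.2.2 = cs.doset G.1.1 G.1.2.1 G.1.2.2 :=
    fun G => CoxAux.doset_eq_of_mem cs (G.2.2.2.2 (CoxAux.mem_doset_self cs F.1 w F.2.2))
  -- a helper for recovering inclusions of index sets
  have key : ∀ (X Y : Set B), F.1 ⊆ X →
      ({b : ↥(F.1ᶜ) | (b : B) ∉ X} ⊆ {b : ↥(F.1ᶜ) | (b : B) ∉ Y}) → Y ⊆ X := by
    intro X Y hX hsub b hbY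
    by_contra hbX
    have hbF : b ∈ F.1ᶜ := fun h => hbX (hX h)
    exact hsub (a := ⟨b, hbF⟩) hbX hbY
  have key2 : ∀ (X Y : Set B), F.2.2 ⊆ X →
      ({b : ↥(F.2.2ᶜ) | (b : B) ∉ X} ⊆ {b : ↥(F.2.2ᶜ) | (b : B) ∉ Y}) → Y ⊆ X := by
    intro X Y hX hsub b hbY
    by_contra hbX
    have hbF : b ∈ F.2.2ᶜ := fun h => hbX (hX h)
    exact hsub (a := ⟨b, hbF⟩) hbX hbY
  -- injectivity
  have finj : Function.Injective f := by
    intro G₁ G₂ hEq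
    have hA : {b : ↥(F.1ᶜ) | (b : B) ∉ G₁.1.1} = {b : ↥(F.1ᶜ) | (b : B) ∉ G₂.1.1} :=
      congrArg Prod.fst hEq
    have hB : {b : ↥(F.2.2ᶜ) | (b : B) ∉ G₁.1.2.2} = {b : ↥(F.2.2ᶜ) | (b : B) ∉ G₂.1.2.2} :=
      congrArg Prod.snd hEq
    have hI : G₁.1.1 = G₂.1.1 :=
      Set.Subset.antisymm (key G₂.1.1 G₁.1.1 G₂.2.2.1 (hA ▸ Set.Subset.refl _))
        (key G₁.1.1 G₂.1.1 G₁.2.2.1 (hA ▸ Set.Subset.refl _))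
    have hJ : G₁.1.2.2 = G₂.1.2.2 :=
      Set.Subset.antisymm (key2 G₂.1.2.2 G₁.1.2.2 G₂.2.2.2.1 (hB ▸ Set.Subset.refl _))
        (key2 G₁.1.2.2 G₂.1.2.2 G₁.2.2.2.1 (hB ▸ Set.Subset.refl _))
    have hrep2 : cs.isMinRep G₁.1.1 G₂.1.2.1 G₁.1.2.2 := by
      rw [hI, hJ]
      exact G₂.2.1
    have hmemd : G₂.1.2.1 ∈ cs.doset G₁.1.1 G₁.1.2.1 G₁.1.2.2 := by
      rw [← hdos G₁, hI, hJ, hdos G₂]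
      exact CoxAux.mem_doset_self cs _ _ _
    have hww : G₁.1.2.1 = G₂.1.2.1 :=
      CoxAux.minRep_unique cs G₁.2.1 hrep2 hmemd
    exact Subtype.ext (Prod.ext hI (Prod.ext hww hJ))
  -- surjectivity
  have fsurj : Function.Surjective f := by
    rintro ⟨A, Bs⟩
    set I' : Set B := F.1 ∪ (Subtype.val '' (Aᶜ)) with hI'
    set J' : Set B := F.2.2 ∪ (Subtype.val '' (Bsᶜ)) with hJ'
    obtain ⟨x, hxD, hxrep, -⟩ := CoxAux.exists_minRep cs I' w J'
    have hxiLE : cs.xiLE (I', x, J') F := by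
      refine ⟨Set.subset_union_left, Set.subset_union_left, ?_⟩
      show cs.doset F.1 w F.2.2 ⊆ cs.doset I' x J'
      rw [CoxAux.doset_eq_of_mem cs hxD]
      exact CoxAux.doset_mono cs Set.subset_union_left Set.subset_union_left w
    refine ⟨⟨(I', x, J'), hxrep, hxiLE⟩, ?_⟩
    show ({b : ↥(F.1ᶜ) | (b : B) ∉ I'}, {b : ↥(F.2.2ᶜ) | (b : B) ∉ J'}) = (A, Bs)
    refine Prod.ext ?_ ?_
    · show {b : ↥(F.1ᶜ) | (b : B) ∉ I'} = A
      ext b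
      simp only [Set.mem_setOf_eq, hI', Set.mem_union, not_or]
      constructor
      · rintro ⟨h1, h2⟩
        by_contra hbA
        exact h2 ⟨b, hbA, rfl⟩
      · intro hbA
        refine ⟨b.2, ?_⟩
        rintro ⟨c, hc, hcb⟩
        exact hc (by rwa [← Subtype.ext hcb] at hbA)
    · show {b : ↥(F.2.2ᶜ) | (b : B) ∉ J'} = Bs
      ext b
      simp only [Set.mem_setOf_eq, hJ', Set.mem_union, not_or]
      constructor
      · rintro ⟨h1, h2⟩
        by_contra hbB
        exact h2 ⟨b, hbB, rfl⟩
      · intro hbB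
        refine ⟨b.2, ?_⟩
        rintro ⟨c, hc, hcb⟩
        exact hc (by rwa [← Subtype.ext hcb] at hbB)
  refine ⟨Equiv.ofBijective f ⟨finj, fsurj⟩, ?_⟩
  intro G₁ G₂
  show cs.xiLE G₁.1 G₂.1 ↔ f G₁ ≤ f G₂
  constructor
  · rintro ⟨h1, h2, h3⟩
    constructor
    · intro b hb hmem
      exact hb (h1 hmem)
    · intro b hb hmem
      exact hb (h2 hmem)
  · rintro ⟨h1, h2⟩
    have hsub1 : G₂.1.1 ⊆ G₁.1.1 := key G₁.1.1 G₂.1.1 G₁.2.2.1 h1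
    have hsub2 : G₂.1.2.2 ⊆ G₁.1.2.2 := key2 G₁.1.2.2 G₂.1.2.2 G₁.2.2.2.1 h2
    refine ⟨hsub1, hsub2, ?_⟩
    rw [← hdos G₂, ← hdos G₁]
    exact CoxAux.doset_mono cs hsub1 hsub2 w
end

section
/- Let (W,S) be a Coxeter system and Ξ its two-sided Coxeter complex. If (I,u,J) ≤ (I',v,J') in Ξ, then u ≤ v in the two-sided weak order on W. -/
open CoxeterSystem

variable {B W : Type*} [Group W] {M : CoxeterMatrix B}

/-- `v` covers `u` in the two-sided weak order: `ℓ(v) = ℓ(u) + 1` and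
`v u⁻¹ ∈ S` or `u⁻¹ v ∈ S`. -/
def CoxeterSystem.tsCov (cs : CoxeterSystem M W) (u v : W) : Prop :=
  cs.length v = cs.length u + 1 ∧
    ((∃ i : B, v * u⁻¹ = cs.simple i) ∨ (∃ i : B, u⁻¹ * v = cs.simple i))

/-- The two-sided weak order: the reflexive-transitive closure of the cover relation,
i.e. `u ≤ v` iff there is a chain `u = v₀, v₁, …, v_k = v` of covers. -/
def CoxeterSystem.tsLE (cs : CoxeterSystem M W) : W → W → Prop :=
  Relation.ReflTransGen cs.tsCov

namespace CoxeterSystem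

open List

variable (cs : CoxeterSystem M W)

local prefix:100 "s" => cs.simple
local prefix:100 "π" => cs.wordProd
local prefix:100 "ℓ" => cs.length

open scoped Classical

/-! ### A sign representation, leading to the strong exchange property -/

/-- The function underlying the permutation action of a simple reflection on `W × ℤˣ`. -/
noncomputable def xiEtaFun (i : B) : W × ℤˣ → W × ℤˣ :=
  fun p => (s i * p.1 * s i, if p.1 = s i then -p.2 else p.2)

lemma xiEta_conj_eq_iff (i : B) (w x : W) :
    s i * w * s i = x ↔ w = s i * x * s i := by
  constructor
  · rintro rfl
    simp [← mul_assoc, cs.simple_mul_simple_self, cs.simple_mul_simple_cancel_right]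
  · rintro rfl
    simp [← mul_assoc, cs.simple_mul_simple_self, cs.simple_mul_simple_cancel_right]

lemma xiEtaFun_involutive (i : B) : Function.Involutive (cs.xiEtaFun i) := by
  classical
  rintro ⟨w, ε⟩
  simp only [xiEtaFun]
  rw [Prod.mk.injEq]
  constructor
  · simp [← mul_assoc, cs.simple_mul_simple_self, cs.simple_mul_simple_cancel_right]
  · have h2 : (s i * w * s i = s i) ↔ (w = s i) := by
      rw [cs.xiEta_conj_eq_iff]
      simp [← mul_assoc, cs.simple_mul_simple_self]
    rw [if_congr h2 rfl rfl]
    by_cases hw : w = s i <;> simp [hw]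

/-- The permutation action of a simple reflection on `W × ℤˣ`. -/
noncomputable def xiEta (i : B) : Equiv.Perm (W × ℤˣ) := (cs.xiEtaFun_involutive i).toPerm

lemma xiEta_apply (i : B) (w : W) (ε : ℤˣ) :
    cs.xiEta i (w, ε) = (s i * w * s i, if w = s i then -ε else ε) := rfl

lemma xiEta_mul_pow_apply (i j : B) (k : ℕ) (w : W) (ε : ℤˣ) :
    ((cs.xiEta i * cs.xiEta j) ^ k) (w, ε) =
      ((s i * s j) ^ k * w * (s j * s i) ^ k,
        ε * ∏ n ∈ Finset.range (2 * k),
          (if w = (s j * s i) ^ n * s j then (-1 : ℤˣ) else 1)) := by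
  induction k generalizing w ε with
  | zero => simp
  | succ k ih =>
    rw [pow_succ, Equiv.Perm.mul_apply]
    have hg : (cs.xiEta i * cs.xiEta j) (w, ε) =
        ((s i * s j) * w * (s j * s i),
          ε * ((if w = (s j * s i) ^ 0 * s j then (-1 : ℤˣ) else 1) *
            (if w = (s j * s i) ^ 1 * s j then (-1 : ℤˣ) else 1))) := by
      rw [Equiv.Perm.mul_apply, xiEta_apply, xiEta_apply]
      rw [Prod.mk.injEq]
      constructor
      · simp [mul_assoc]
      · have hcond : (s j * w * s j = s i) ↔ (w = (s j * s i) ^ 1 * s j) := by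
          rw [cs.xiEta_conj_eq_iff, pow_one]
        have hcond0 : (w = s j) ↔ (w = (s j * s i) ^ 0 * s j) := by rw [pow_zero, one_mul]
        rw [if_congr hcond rfl rfl, if_congr hcond0 rfl rfl]
        by_cases h0 : w = (s j * s i) ^ 0 * s j
        · by_cases h1 : w = (s j * s i) ^ 1 * s j
          · simp only [if_pos h0, if_pos h1]; simp
          · simp only [if_pos h0, if_neg h1]; simp
        · by_cases h1 : w = (s j * s i) ^ 1 * s j
          · simp only [if_neg h0, if_pos h1]; simp
          · simp only [if_neg h0, if_neg h1]; simp
    rw [hg, ih]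
    rw [Prod.mk.injEq]
    constructor
    · rw [pow_succ (s i * s j) k, pow_succ' (s j * s i) k]
      simp only [mul_assoc]
    · have hca : (s i * s j) * (s j * s i) = 1 := by
        simp [mul_assoc, cs.simple_mul_simple_cancel_left, cs.simple_mul_simple_self]
      have hca' : (s j * s i) * (s i * s j) = 1 := by
        simp [mul_assoc, cs.simple_mul_simple_cancel_left, cs.simple_mul_simple_self]
      have id1 : ∀ n : ℕ, (s j * s i) * ((s j * s i) ^ n * s j) * (s i * s j)
          = (s j * s i) ^ (n + 2) * s j := by
        intro n
        rw [pow_succ (s j * s i) (n + 1), pow_succ' (s j * s i) n]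
        simp only [mul_assoc]
      have hshift : ∀ n : ℕ,
          ((s i * s j) * w * (s j * s i) = (s j * s i) ^ n * s j)
            ↔ (w = (s j * s i) ^ (n + 2) * s j) := by
        intro n
        constructor
        · intro hEq
          have hw : (s j * s i) * ((s i * s j) * w * (s j * s i)) * (s i * s j)
              = (s j * s i) * ((s j * s i) ^ n * s j) * (s i * s j) := by rw [hEq]
          calc w = ((s j * s i) * (s i * s j)) * w * ((s j * s i) * (s i * s j)) := by
                rw [hca']; simp
            _ = (s j * s i) * ((s i * s j) * w * (s j * s i)) * (s i * s j) := by
                simp only [mul_assoc]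
            _ = (s j * s i) * ((s j * s i) ^ n * s j) * (s i * s j) := hw
            _ = (s j * s i) ^ (n + 2) * s j := id1 n
        · rintro rfl
          calc (s i * s j) * ((s j * s i) ^ (n + 2) * s j) * (s j * s i)
              = (s i * s j) * ((s j * s i) * ((s j * s i) ^ n * s j) * (s i * s j)) *
                  (s j * s i) := by rw [id1 n]
            _ = ((s i * s j) * (s j * s i)) * ((s j * s i) ^ n * s j) *
                  ((s i * s j) * (s j * s i)) := by simp only [mul_assoc]
            _ = (s j * s i) ^ n * s j := by rw [hca]; simp
      have hprod : ∏ n ∈ Finset.range (2 * k),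
            (if (s i * s j) * w * (s j * s i) = (s j * s i) ^ n * s j then (-1 : ℤˣ) else 1)
          = ∏ n ∈ Finset.range (2 * k),
            (if w = (s j * s i) ^ (n + 1 + 1) * s j then (-1 : ℤˣ) else 1) :=
        Finset.prod_congr rfl (fun n _ => if_congr (by rw [hshift n]) rfl rfl)
      rw [hprod]
      have h2k : 2 * (k + 1) = (2 * k + 1) + 1 := by ring
      rw [h2k, Finset.prod_range_succ', Finset.prod_range_succ']
      ac_rfl

lemma xiEta_liftable : M.IsLiftable cs.xiEta := by
  classical
  intro i j
  rcases eq_or_ne (M i j) 0 with h0 | h0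
  · rw [h0, pow_zero]
  · apply Equiv.ext
    rintro ⟨w, ε⟩
    rw [cs.xiEta_mul_pow_apply i j (M i j) w ε]
    rw [cs.simple_mul_simple_pow i j, cs.simple_mul_simple_pow' i j]
    simp only [one_mul, mul_one, Equiv.Perm.one_apply]
    rw [Prod.mk.injEq]
    refine ⟨rfl, ?_⟩
    rw [two_mul, Finset.prod_range_add]
    have hsame : ∀ n, (if w = (s j * s i) ^ (M i j + n) * s j then (-1 : ℤˣ) else 1)
        = (if w = (s j * s i) ^ n * s j then (-1 : ℤˣ) else 1) := by
      intro n
      rw [pow_add, cs.simple_mul_simple_pow' i j, one_mul]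
    rw [Finset.prod_congr rfl (fun n _ => hsame n), ← Finset.prod_mul_distrib]
    have hone : ∀ n : ℕ, (if w = (s j * s i) ^ n * s j then (-1 : ℤˣ) else 1) *
        (if w = (s j * s i) ^ n * s j then (-1 : ℤˣ) else 1) = 1 := by
      intro n
      split <;> simp
    rw [Finset.prod_congr rfl (fun n _ => hone n)]
    simp

/-- The sign representation homomorphism. -/
noncomputable def xiHom : W →* Equiv.Perm (W × ℤˣ) := cs.lift ⟨cs.xiEta, cs.xiEta_liftable⟩

lemma xiHom_simple (i : B) : cs.xiHom (s i) = cs.xiEta i :=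
  cs.lift_apply_simple cs.xiEta_liftable i

/-- Sign of a list of elements relative to `t`. -/
noncomputable def xiSign (t : W) (l : List W) : ℤˣ :=
  (l.map (fun x => if x = t then (-1 : ℤˣ) else 1)).prod

lemma xiSign_nil (t : W) : xiSign t [] = 1 := rfl

lemma xiSign_cons (t x : W) (l : List W) :
    xiSign t (x :: l) = (if x = t then (-1 : ℤˣ) else 1) * xiSign t l := by
  simp [xiSign]

lemma xiSign_eq_one_of_not_mem (t : W) (l : List W) (h : t ∉ l) : xiSign t l = 1 := by
  classical
  apply List.prod_eq_one
  intro x hx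
  rw [List.mem_map] at hx
  obtain ⟨y, hy, rfl⟩ := hx
  rw [if_neg]
  rintro rfl
  exact h hy

lemma xiSign_map_conj (g t : W) (l : List W) :
    xiSign t (l.map (fun x => g * x * g⁻¹)) = xiSign (g⁻¹ * t * g) l := by
  classical
  unfold xiSign
  rw [List.map_map]
  congr 1
  apply List.map_congr_left
  intro x _
  simp only [Function.comp_apply]
  refine if_congr ?_ rfl rfl
  constructor
  · rintro rfl
    group
  · rintro rfl
    group

lemma xiHom_wordProd_inv_apply (ω : List B) (t : W) (ε : ℤˣ) :
    cs.xiHom (π ω)⁻¹ (t, ε) = ((π ω)⁻¹ * t * (π ω), ε * xiSign t (cs.leftInvSeq ω)) := by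
  classical
  induction ω generalizing t ε with
  | nil => simp [xiSign_nil]
  | cons i ω ih =>
    rw [wordProd_cons, mul_inv_rev, cs.inv_simple, map_mul, Equiv.Perm.mul_apply,
      cs.xiHom_simple, cs.xiEta_apply, ih]
    rw [Prod.mk.injEq]
    constructor
    · group
    · have hlis : cs.leftInvSeq (i :: ω) =
          s i :: (cs.leftInvSeq ω).map (MulAut.conj (s i)) := rfl
      rw [hlis, xiSign_cons]
      have hconj : (cs.leftInvSeq ω).map (MulAut.conj (s i))
          = (cs.leftInvSeq ω).map (fun x => (s i) * x * (s i)⁻¹) := by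
        apply List.map_congr_left
        intro x _
        rfl
      rw [hconj, xiSign_map_conj, cs.inv_simple]
      by_cases htsi : t = s i
      · subst htsi
        simp [neg_mul, mul_neg, mul_assoc]
      · rw [if_neg htsi, if_neg (fun h => htsi h.symm), one_mul]

/-- The sign cocycle. -/
noncomputable def xiSgn (w t : W) : ℤˣ := (cs.xiHom w⁻¹ (t, 1)).2

lemma xiHom_inv_apply (w t : W) (ε : ℤˣ) :
    cs.xiHom w⁻¹ (t, ε) = (w⁻¹ * t * w, ε * cs.xiSgn w t) := by
  obtain ⟨ω, rfl⟩ := cs.wordProd_surjective w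
  rw [cs.xiHom_wordProd_inv_apply]
  unfold xiSgn
  rw [cs.xiHom_wordProd_inv_apply]
  simp

lemma xiSgn_wordProd (ω : List B) (t : W) :
    cs.xiSgn (π ω) t = xiSign t (cs.leftInvSeq ω) := by
  unfold xiSgn
  rw [cs.xiHom_wordProd_inv_apply]
  simp

lemma xiSgn_mul (u v t : W) :
    cs.xiSgn (u * v) t = cs.xiSgn u t * cs.xiSgn v (u⁻¹ * t * u) := by
  have h : cs.xiHom (u * v)⁻¹ (t, 1)
      = ((u * v)⁻¹ * t * (u * v), (1 * cs.xiSgn u t) * cs.xiSgn v (u⁻¹ * t * u)) := by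
    rw [mul_inv_rev, map_mul, Equiv.Perm.mul_apply, cs.xiHom_inv_apply u t 1,
      cs.xiHom_inv_apply v (u⁻¹ * t * u) (1 * cs.xiSgn u t)]
    rw [Prod.mk.injEq]
    exact ⟨by group, rfl⟩
  have h2 := congrArg Prod.snd h
  simpa [xiSgn] using h2

lemma xiSgn_simple_self (i : B) : cs.xiSgn (s i) (s i) = -1 := by
  unfold xiSgn
  rw [cs.inv_simple, cs.xiHom_simple, cs.xiEta_apply]
  simp

lemma length_lt_of_xiSgn_neg {w t : W} (h : cs.xiSgn w t = -1) : ℓ (t * w) < ℓ w := by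
  obtain ⟨ω, hred, rfl⟩ := cs.exists_reduced_word' w
  rw [cs.xiSgn_wordProd] at h
  have hmem : t ∈ cs.leftInvSeq ω := by
    by_contra hns
    rw [xiSign_eq_one_of_not_mem t _ hns] at h
    have := congrArg Units.val h
    norm_num at this
  exact (cs.isLeftInversion_of_mem_leftInvSeq hred hmem).2

lemma xiSgn_self_of_isReflection {t : W} (ht : cs.IsReflection t) : cs.xiSgn t t = -1 := by
  obtain ⟨x, k, rfl⟩ := ht
  set t := x * s k * x⁻¹ with htdef
  have hx : x⁻¹ * t * x = s k := by rw [htdef]; group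
  have e1 : cs.xiSgn t t = cs.xiSgn x t * cs.xiSgn (s k * x⁻¹) (s k) := by
    have : t = x * (s k * x⁻¹) := by rw [htdef]; group
    nth_rw 1 [this]
    rw [cs.xiSgn_mul, hx]
  have e2 : cs.xiSgn (s k * x⁻¹) (s k) = cs.xiSgn (s k) (s k) * cs.xiSgn x⁻¹ (s k) := by
    rw [cs.xiSgn_mul]
    congr 1
    congr 1
    rw [cs.inv_simple, cs.simple_mul_simple_self, one_mul]
  have e3 : cs.xiSgn x t * cs.xiSgn x⁻¹ (s k) = 1 := by
    have : (1 : ℤˣ) = cs.xiSgn (x * x⁻¹) t := by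
      rw [mul_inv_cancel]
      unfold xiSgn
      simp
    rw [cs.xiSgn_mul, hx] at this
    exact this.symm
  rw [e1, e2, cs.xiSgn_simple_self, neg_mul, one_mul, mul_neg, e3]

lemma xiSgn_neg_of_isLeftInversion {w t : W} (ht : cs.IsReflection t)
    (h : ℓ (t * w) < ℓ w) : cs.xiSgn w t = -1 := by
  have hself : t * t = 1 := ht.mul_self
  have h2 : t * (t * w) = w := by rw [← mul_assoc, hself, one_mul]
  have h1 : cs.xiSgn w t = cs.xiSgn t t * cs.xiSgn (t * w) t := by
    nth_rw 1 [← h2]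
    rw [cs.xiSgn_mul]
    congr 2
    rw [ht.inv, hself, one_mul]
  rcases Int.units_eq_one_or (cs.xiSgn (t * w) t) with hone | hneg
  · rw [h1, hone, mul_one, cs.xiSgn_self_of_isReflection ht]
  · exfalso
    have := cs.length_lt_of_xiSgn_neg hneg
    rw [h2] at this
    omega

/-- Strong exchange property (left version, arbitrary words). -/
lemma exists_eraseIdx_of_isLeftInversion (ω : List B) {t : W} (ht : cs.IsReflection t)
    (h : ℓ (t * π ω) < ℓ (π ω)) :
    ∃ l, l < ω.length ∧ t * π ω = π (ω.eraseIdx l) := by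
  have hsgn := cs.xiSgn_neg_of_isLeftInversion ht h
  rw [cs.xiSgn_wordProd] at hsgn
  have hmem : t ∈ cs.leftInvSeq ω := by
    by_contra hns
    rw [xiSign_eq_one_of_not_mem t _ hns] at hsgn
    have := congrArg Units.val hsgn
    norm_num at this
  obtain ⟨l, hl, hget⟩ := List.mem_iff_getElem.mp hmem
  have hl' : l < ω.length := by
    have := cs.length_leftInvSeq ω
    omega
  refine ⟨l, hl', ?_⟩
  have hgetD : (cs.leftInvSeq ω).getD l 1 = t := by
    rw [List.getD_eq_getElem _ 1 hl, hget]
  rw [← hgetD, cs.getD_leftInvSeq_mul_wordProd]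

/-- Strong exchange property (right version for simple reflections, arbitrary words). -/
lemma exists_eraseIdx_of_isRightDescent (ω : List B) {j : B}
    (h : ℓ (π ω * s j) < ℓ (π ω)) :
    ∃ l, l < ω.length ∧ π ω * s j = π (ω.eraseIdx l) := by
  have hrefl : cs.IsReflection (π ω * s j * (π ω)⁻¹) := ⟨π ω, j, rfl⟩
  have h1 : (π ω * s j * (π ω)⁻¹) * π ω = π ω * s j := by group
  have h2 : ℓ ((π ω * s j * (π ω)⁻¹) * π ω) < ℓ (π ω) := by rw [h1]; exact h
  obtain ⟨l, hl, he⟩ := cs.exists_eraseIdx_of_isLeftInversion ω hrefl h2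
  exact ⟨l, hl, by rw [← h1, he]⟩

/-! ### Parabolic subgroups and words -/

lemma length_eq_of_isReduced {ω : List B} (h : cs.IsReduced ω) : ℓ (π ω) = ω.length := h

lemma simple_mem_parab {J : Set B} {j : B} (hj : j ∈ J) : s j ∈ cs.parab J :=
  Subgroup.subset_closure ⟨j, hj, rfl⟩

lemma wordProd_mem_parab {J : Set B} {β : List B} (hβ : ∀ x ∈ β, x ∈ J) :
    π β ∈ cs.parab J := by
  induction β with
  | nil => rw [wordProd_nil]; exact one_mem _
  | cons i ω ih =>
    rw [wordProd_cons]
    exact mul_mem (cs.simple_mem_parab (hβ i mem_cons_self))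
      (ih (fun x hx => hβ x (mem_cons_of_mem i hx)))

lemma exists_word_of_mem_parab {J : Set B} {b : W} (hb : b ∈ cs.parab J) :
    ∃ β : List B, (∀ x ∈ β, x ∈ J) ∧ b = π β := by
  induction hb using Subgroup.closure_induction with
  | mem x hx =>
    obtain ⟨j, hj, rfl⟩ := hx
    exact ⟨[j], by simpa using hj, (cs.wordProd_singleton j).symm⟩
  | one => exact ⟨[], by simp, by simp⟩
  | mul x y _ _ ihx ihy =>
    obtain ⟨β₁, h1, rfl⟩ := ihx
    obtain ⟨β₂, h2, rfl⟩ := ihy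
    refine ⟨β₁ ++ β₂, ?_, (cs.wordProd_append β₁ β₂).symm⟩
    intro x hx
    rcases List.mem_append.mp hx with h | h
    exacts [h1 x h, h2 x h]
  | inv x _ ihx =>
    obtain ⟨β₁, h1, rfl⟩ := ihx
    exact ⟨β₁.reverse, fun x hx => h1 x (List.mem_reverse.mp hx),
      (cs.wordProd_reverse β₁).symm⟩

lemma exists_reduced_word_of_mem_parab {J : Set B} {b : W} (hb : b ∈ cs.parab J) :
    ∃ β : List B, (∀ x ∈ β, x ∈ J) ∧ cs.IsReduced β ∧ b = π β := by
  suffices H : ∀ n (β : List B), β.length = n → (∀ x ∈ β, x ∈ J) →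
      ∃ γ : List B, (∀ x ∈ γ, x ∈ J) ∧ cs.IsReduced γ ∧ π β = π γ by
    obtain ⟨β, hβJ, rfl⟩ := cs.exists_word_of_mem_parab hb
    obtain ⟨γ, h1, h2, h3⟩ := H β.length β rfl hβJ
    exact ⟨γ, h1, h2, h3⟩
  intro n
  induction n using Nat.strong_induction_on with
  | _ n ih =>
  intro β hlen hβJ
  by_cases hred : cs.IsReduced β
  · exact ⟨β, hβJ, hred, rfl⟩
  · have hne : β ≠ [] := by
      rintro rfl
      exact hred (by simp [IsReduced])
    have hpos : 0 < β.length := List.length_pos_iff.mpr hne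
    have hwit : ¬ cs.IsReduced (β.take (β.length - 1 + 1)) := by
      have h2 : β.length - 1 + 1 = β.length := by omega
      rw [h2, List.take_length]
      exact hred
    have hex : ∃ k, ¬ cs.IsReduced (β.take (k + 1)) := ⟨β.length - 1, hwit⟩
    have hk : ¬ cs.IsReduced (β.take (Nat.find hex + 1)) := Nat.find_spec hex
    have hkle : Nat.find hex ≤ β.length - 1 := Nat.find_le hwit
    set k := Nat.find hex with hkdef
    have hklt : k < β.length := by omega
    have hkred : cs.IsReduced (β.take k) := by
      rcases Nat.eq_zero_or_pos k with h0 | h0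
      · rw [h0]
        simp [IsReduced]
      · have hmin := Nat.find_min hex (m := k - 1) (by omega)
        rw [not_not] at hmin
        have h2 : k - 1 + 1 = k := by omega
        rwa [h2] at hmin
    have hlen_take : (β.take k).length = k := by
      rw [List.length_take]; omega
    have h1 : ℓ (π (β.take k)) = k := (cs.length_eq_of_isReduced hkred).trans hlen_take
    have htake : β.take (k + 1) = β.take k ++ [β[k]] := by
      rw [List.take_succ, List.getElem?_eq_getElem hklt]
      rfl
    have hlen1 : (β.take (k + 1)).length = k + 1 := by
      rw [List.length_take]; omega
    have hnotred : ℓ (π (β.take k) * s (β[k])) < k := by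
      have hne2 : ℓ (π (β.take (k + 1))) ≠ k + 1 := by
        intro hc
        exact hk (hc.trans hlen1.symm)
      rw [htake, wordProd_append, wordProd_singleton] at hne2
      rcases cs.length_mul_simple (π (β.take k)) (β[k]) with h | h
      · rw [h1] at h; omega
      · rw [h1] at h; omega
    obtain ⟨l, hl, hdel⟩ := cs.exists_eraseIdx_of_isRightDescent (β.take k)
      (j := β[k]) (by rw [h1]; exact hnotred)
    set γ := (β.take k).eraseIdx l ++ β.drop (k + 1) with hγ
    have hπ : π β = π γ := by
      conv_lhs => rw [← List.take_append_drop (k + 1) β]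
      rw [wordProd_append, hγ, wordProd_append, ← hdel, htake, wordProd_append,
        wordProd_singleton]
    have hγJ : ∀ x ∈ γ, x ∈ J := by
      intro x hx
      rcases List.mem_append.mp hx with h | h
      · exact hβJ x (List.take_subset k β (List.eraseIdx_subset h))
      · exact hβJ x (List.drop_subset _ _ h)
    have hlenerase : ((β.take k).eraseIdx l).length + 1 = (β.take k).length :=
      List.length_eraseIdx_add_one (by rw [hlen_take]; rwa [hlen_take] at hl)
    have hγlen : γ.length < n := by
      rw [hγ, List.length_append, List.length_drop]
      omega
    obtain ⟨γ', hJ', hred', heq'⟩ := ih γ.length hγlen γ rfl hγJ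
    exact ⟨γ', hJ', hred', hπ.trans heq'⟩

/-! ### Minimal length coset representatives -/

/-- `x` has minimal length in its coset `x W_J`. -/
def RMin (J : Set B) (x : W) : Prop := ∀ b ∈ cs.parab J, ℓ x ≤ ℓ (x * b)

/-- `x` has no right descents in `J`. -/
def RFree (J : Set B) (x : W) : Prop := ∀ j ∈ J, ¬ cs.IsRightDescent x j

/-- `x` has no left descents in `I`. -/
def LFree (I : Set B) (x : W) : Prop := ∀ i ∈ I, ¬ cs.IsLeftDescent x i

lemma rmin_length_mul {J : Set B} {x : W} (hx : cs.RMin J x) :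
    ∀ b ∈ cs.parab J, ℓ (x * b) = ℓ x + ℓ b := by
  suffices H : ∀ n, ∀ b ∈ cs.parab J, ℓ b = n → ℓ (x * b) = ℓ x + ℓ b by
    intro b hb
    exact H (ℓ b) b hb rfl
  intro n
  induction n using Nat.strong_induction_on with
  | _ n ih =>
  intro b hb hbn
  obtain ⟨β, hβJ, hβred, rfl⟩ := cs.exists_reduced_word_of_mem_parab hb
  rcases List.eq_nil_or_concat β with rfl | ⟨β', j, rfl⟩
  · simp
  · simp only [List.concat_eq_append] at hβJ hβred hb hbn ⊢
    have hβ'J : ∀ y ∈ β', y ∈ J := fun y hy => hβJ y (by simp [hy])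
    have hjJ : j ∈ J := hβJ j (by simp)
    have hβ'red : cs.IsReduced β' := by
      have := hβred.take β'.length
      rwa [List.take_left] at this
    have hb' : π β' ∈ cs.parab J := cs.wordProd_mem_parab hβ'J
    have hlb : ℓ (π (β' ++ [j])) = β'.length + 1 := by
      rw [cs.length_eq_of_isReduced hβred]
      simp
    have hlb' : ℓ (π β') = β'.length := cs.length_eq_of_isReduced hβ'red
    have ih' : ℓ (x * π β') = ℓ x + β'.length := by
      have := ih (ℓ (π β')) (by omega) (π β') hb' rfl
      rwa [hlb'] at this
    have hstep : ℓ (x * π β' * s j) = ℓ (x * π β') + 1 := by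
      rcases cs.length_mul_simple (x * π β') j with h | h
      · exact h
      · exfalso
        obtain ⟨ξ, hξred, hξ⟩ := cs.exists_reduced_word' x
        have hlx : ℓ x = ξ.length := by rw [hξ]; exact cs.length_eq_of_isReduced hξred
        have hπω : π (ξ ++ β') = x * π β' := by rw [wordProd_append, ← hξ]
        obtain ⟨l, hl, hdel⟩ := cs.exists_eraseIdx_of_isRightDescent (ξ ++ β')
          (j := j) (by rw [hπω]; omega)
        rw [hπω] at hdel
        rcases lt_or_ge l ξ.length with hlξ | hlξ
        · have herase : (ξ ++ β').eraseIdx l = ξ.eraseIdx l ++ β' :=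
            List.eraseIdx_append_of_lt_length hlξ _
          rw [herase, wordProd_append] at hdel
          have h2 : x * (π β' * s j * (π β')⁻¹) = π (ξ.eraseIdx l) := by
            rw [← mul_assoc, ← mul_assoc, hdel]
            group
          have ht : π β' * s j * (π β')⁻¹ ∈ cs.parab J :=
            mul_mem (mul_mem hb' (cs.simple_mem_parab hjJ)) (inv_mem hb')
          have hxle := hx _ ht
          rw [h2] at hxle
          have hle := cs.length_wordProd_le (ξ.eraseIdx l)
          have hlen_er : (ξ.eraseIdx l).length + 1 = ξ.length :=
            List.length_eraseIdx_add_one hlξ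
          omega
        · have herase : (ξ ++ β').eraseIdx l = ξ ++ β'.eraseIdx (l - ξ.length) :=
            List.eraseIdx_append_of_length_le hlξ _
          rw [herase, wordProd_append, ← hξ] at hdel
          have h2 : π β' * s j = π (β'.eraseIdx (l - ξ.length)) := by
            rw [mul_assoc] at hdel
            exact mul_left_cancel hdel
          have hle := cs.length_wordProd_le (β'.eraseIdx (l - ξ.length))
          rw [← h2] at hle
          have hllt : l - ξ.length < β'.length := by
            rw [List.length_append] at hl
            omega
          have hlen_er : (β'.eraseIdx (l - ξ.length)).length + 1 = β'.length :=
            List.length_eraseIdx_add_one hllt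
          have hbval : π β' * s j = π (β' ++ [j]) := by
            rw [wordProd_append, wordProd_singleton]
          rw [hbval] at hle
          omega
    have hfin : x * π (β' ++ [j]) = x * π β' * s j := by
      rw [wordProd_append, wordProd_singleton, ← mul_assoc]
    rw [hfin, hstep, ih', hlb]
    ring

lemma exists_rmin (J : Set B) (x : W) :
    ∃ b₀ ∈ cs.parab J, cs.RMin J (x * b₀) := by
  have hne : ((fun b => ℓ (x * b)) '' (cs.parab J : Set W)).Nonempty :=
    ⟨ℓ (x * 1), 1, one_mem _, rfl⟩
  obtain ⟨b₀, hb₀, hval⟩ := Nat.sInf_mem hne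
  refine ⟨b₀, hb₀, ?_⟩
  intro b hb
  have hval' : ℓ (x * b₀) = sInf ((fun b => ℓ (x * b)) '' (cs.parab J : Set W)) := hval
  rw [hval', mul_assoc]
  exact Nat.sInf_le ⟨b₀ * b, mul_mem hb₀ hb, rfl⟩

lemma rfree_rmin {J : Set B} {x : W} (hx : cs.RFree J x) : cs.RMin J x := by
  obtain ⟨b₀, hb₀, hmin⟩ := cs.exists_rmin J x
  obtain ⟨β, hβJ, hβred, hβeq⟩ := cs.exists_reduced_word_of_mem_parab (inv_mem hb₀)
  rcases List.eq_nil_or_concat β with rfl | ⟨β', j, rfl⟩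
  · have hb1 : b₀ = 1 := by
      have h0 : b₀⁻¹ = 1 := by rw [hβeq, wordProd_nil]
      rwa [inv_eq_one] at h0
    rwa [hb1, mul_one] at hmin
  · exfalso
    simp only [List.concat_eq_append] at hβJ hβred hβeq
    have hjJ : j ∈ J := hβJ j (by simp)
    have hβ'J : ∀ y ∈ β', y ∈ J := fun y hy => hβJ y (by simp [hy])
    have hb' : π β' ∈ cs.parab J := cs.wordProd_mem_parab hβ'J
    have hβ'red : cs.IsReduced β' := by
      have := hβred.take β'.length
      rwa [List.take_left] at this
    have h1 : b₀⁻¹ = π β' * s j := by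
      rw [hβeq, wordProd_append, wordProd_singleton]
    have h2 : x * s j = (x * b₀) * (π β') := by
      calc x * s j = (x * b₀) * (b₀⁻¹ * s j) := by group
        _ = (x * b₀) * (π β' * s j * s j) := by rw [h1]
        _ = (x * b₀) * π β' := by rw [cs.simple_mul_simple_cancel_right]
    have e1 : ℓ (x * b₀ * π β') = ℓ (x * b₀) + β'.length := by
      rw [cs.rmin_length_mul hmin _ hb', cs.length_eq_of_isReduced hβ'red]
    have e2 : ℓ x = ℓ (x * b₀) + (β'.length + 1) := by
      have e3 : x * b₀ * b₀⁻¹ = x := by group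
      have := cs.rmin_length_mul hmin _ (inv_mem hb₀)
      rw [e3] at this
      rw [this, hβeq, cs.length_eq_of_isReduced hβred]
      simp
    have hdesc : ℓ (x * s j) < ℓ x := by
      rw [h2, e1]
      omega
    exact hx j hjJ hdesc

lemma rfree_unique {J : Set B} {y z b : W} (hy : cs.RFree J y) (hz : cs.RFree J z)
    (hb : b ∈ cs.parab J) (hzy : z = y * b) : z = y := by
  have hminy := cs.rfree_rmin hy
  have hminz := cs.rfree_rmin hz
  have e1 : ℓ z = ℓ y + ℓ b := by
    rw [hzy]
    exact cs.rmin_length_mul hminy b hb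
  have e2 : ℓ y = ℓ z + ℓ b := by
    have hy' : y = z * b⁻¹ := by rw [hzy]; group
    rw [hy', cs.rmin_length_mul hminz b⁻¹ (inv_mem hb), cs.length_inv]
  have hb0 : ℓ b = 0 := by omega
  have hb1 : b = 1 := cs.length_eq_zero_iff.mp hb0
  rw [hzy, hb1, mul_one]

/-! ### Deodhar's lemma and double coset uniqueness -/

lemma deodhar {J : Set B} {y : W} (hy : cs.RFree J y) (i : B) :
    cs.RFree J (s i * y) ∨ ∃ j ∈ J, s i * y = y * s j := by
  by_cases hfree : cs.RFree J (s i * y)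
  · exact Or.inl hfree
  · right
    unfold RFree at hfree
    push_neg at hfree
    obtain ⟨j, hjJ, hdesc⟩ := hfree
    have hdesc' : ℓ (s i * y * s j) < ℓ (s i * y) := hdesc
    have hysj : ℓ (y * s j) = ℓ y + 1 := cs.not_isRightDescent_iff.mp (hy j hjJ)
    rcases cs.length_simple_mul y i with hup | hdown
    · obtain ⟨ξ, hξred, hξ⟩ := cs.exists_reduced_word' y
      have hπ : π (i :: ξ) = s i * y := by rw [wordProd_cons, ← hξ]
      obtain ⟨l, hl, hdel⟩ := cs.exists_eraseIdx_of_isRightDescent (i :: ξ)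
        (j := j) (by rw [hπ]; exact hdesc')
      rw [hπ] at hdel
      rcases l with _ | l'
      · refine ⟨j, hjJ, ?_⟩
        have hkey : s i * y * s j = y := by
          rw [hdel]
          show π ((i :: ξ).eraseIdx 0) = y
          rw [List.eraseIdx_cons_zero, ← hξ]
        calc s i * y = (s i * y * s j) * s j := by
              rw [cs.simple_mul_simple_cancel_right]
          _ = y * s j := by rw [hkey]
      · exfalso
        have herase : (i :: ξ).eraseIdx (l' + 1) = i :: ξ.eraseIdx l' := rfl
        rw [herase, wordProd_cons] at hdel
        have h2 : y * s j = π (ξ.eraseIdx l') := by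
          apply mul_left_cancel (a := s i)
          rw [← mul_assoc]
          exact hdel
        have hle := cs.length_wordProd_le (ξ.eraseIdx l')
        have hl' : l' < ξ.length := by simpa using hl
        have hlenr : (ξ.eraseIdx l').length + 1 = ξ.length :=
          List.length_eraseIdx_add_one hl'
        have hly : ℓ y = ξ.length := by rw [hξ]; exact cs.length_eq_of_isReduced hξred
        rw [← h2] at hle
        omega
    · exfalso
      rcases cs.length_simple_mul (y * s j) i with h | h
      · rw [← mul_assoc] at h
        omega
      · rw [← mul_assoc] at h
        omega

lemma parab_strip {I : Set B} {a : W} (ha : a ∈ cs.parab I) (hne : a ≠ 1) :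
    ∃ a' ∈ cs.parab I, ∃ i ∈ I, a = a' * s i ∧ ℓ a' < ℓ a := by
  obtain ⟨α, hαI, hαred, rfl⟩ := cs.exists_reduced_word_of_mem_parab ha
  rcases List.eq_nil_or_concat α with rfl | ⟨α', i, rfl⟩
  · exact absurd (cs.wordProd_nil) hne
  · simp only [List.concat_eq_append] at hαI hαred ⊢
    have hα'red : cs.IsReduced α' := by
      have := hαred.take α'.length
      rwa [List.take_left] at this
    refine ⟨π α', cs.wordProd_mem_parab (fun y hy => hαI y (by simp [hy])), i,
      hαI i (by simp), ?_, ?_⟩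
    · rw [wordProd_append, wordProd_singleton]
    · rw [cs.length_eq_of_isReduced hα'red, cs.length_eq_of_isReduced hαred]
      simp

lemma rfree_doset_right {J : Set B} (I : Set B) :
    ∀ n, ∀ a ∈ cs.parab I, ℓ a = n → ∀ y, cs.RFree J y → ∀ b ∈ cs.parab J,
      ∀ z, cs.RFree J z → z = a * y * b → ∃ c ∈ cs.parab I, z = c * y := by
  intro n
  induction n using Nat.strong_induction_on with
  | _ n ih =>
  intro a ha han y hy b hb z hz hzeq
  rcases eq_or_ne a 1 with rfl | hane
  · have hzyb : z = y * b := by rw [hzeq, one_mul]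
    have := cs.rfree_unique hy hz hb hzyb
    exact ⟨1, one_mem _, by rw [this, one_mul]⟩
  · obtain ⟨a', ha', i, hiI, haeq, hlt⟩ := cs.parab_strip ha hane
    rcases cs.deodhar hy i with hfree | ⟨j, hjJ, hswap⟩
    · have hzeq' : z = a' * (s i * y) * b := by
        rw [hzeq, haeq]; group
      obtain ⟨c, hc, hcy⟩ := ih (ℓ a') (by omega) a' ha' rfl (s i * y) hfree
        b hb z hz hzeq'
      exact ⟨c * s i, mul_mem hc (cs.simple_mem_parab hiI), by rw [hcy]; group⟩
    · have hzeq' : z = a' * y * (s j * b) := by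
        rw [hzeq, haeq]
        calc a' * s i * y * b = a' * (s i * y) * b := by group
          _ = a' * (y * s j) * b := by rw [hswap]
          _ = a' * y * (s j * b) := by group
      exact ih (ℓ a') (by omega) a' ha' rfl y hy (s j * b)
        (mul_mem (cs.simple_mem_parab hjJ) hb) z hz hzeq'

lemma lfree_unique {I : Set B} {y z c : W} (hy : cs.LFree I y) (hz : cs.LFree I z)
    (hc : c ∈ cs.parab I) (hzy : z = c * y) : z = y := by
  have hy' : cs.RFree I y⁻¹ := fun i hi hdesc =>
    hy i hi (by rwa [cs.isRightDescent_inv_iff] at hdesc)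
  have hz' : cs.RFree I z⁻¹ := fun i hi hdesc =>
    hz i hi (by rwa [cs.isRightDescent_inv_iff] at hdesc)
  have hzyinv : z⁻¹ = y⁻¹ * c⁻¹ := by rw [hzy]; group
  have := cs.rfree_unique hy' hz' (inv_mem hc) hzyinv
  exact inv_injective this

lemma minRep_unique {I J : Set B} {u w : W} (hu : cs.isMinRep I u J)
    (hw : cs.isMinRep I w J) (hmem : w ∈ cs.doset I u J) : w = u := by
  obtain ⟨a, ha, b, hb, hweq⟩ := hmem
  obtain ⟨c, hc, hcw⟩ := cs.rfree_doset_right I (ℓ a) a ha rfl u hu.2 b hb w hw.2 hweq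
  exact cs.lfree_unique hu.1 hw.1 hc hcw

/-! ### The main lemma -/

lemma tsLE_of_mem_doset {I J : Set B} {u : W} (hu : cs.isMinRep I u J) :
    ∀ n w, ℓ w = n → w ∈ cs.doset I u J → cs.tsLE u w := by
  intro n
  induction n using Nat.strong_induction_on with
  | _ n ih =>
  intro w hwn hmem
  by_cases hL : ∃ i ∈ I, cs.IsLeftDescent w i
  · obtain ⟨i, hiI, hdesc⟩ := hL
    have hdesc' : ℓ (s i * w) < ℓ w := hdesc
    have hcover : ℓ w = ℓ (s i * w) + 1 := by
      rcases cs.length_simple_mul w i with h | h <;> omega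
    have hmem' : s i * w ∈ cs.doset I u J := by
      obtain ⟨a, ha, b, hb, rfl⟩ := hmem
      exact ⟨s i * a, mul_mem (cs.simple_mem_parab hiI) ha, b, hb, by group⟩
    have hts := ih (ℓ (s i * w)) (by omega) (s i * w) rfl hmem'
    refine Relation.ReflTransGen.tail hts ⟨hcover, Or.inl ⟨i, ?_⟩⟩
    rw [mul_inv_rev, cs.inv_simple]
    group
  · by_cases hR : ∃ j ∈ J, cs.IsRightDescent w j
    · obtain ⟨j, hjJ, hdesc⟩ := hR
      have hdesc' : ℓ (w * s j) < ℓ w := hdesc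
      have hcover : ℓ w = ℓ (w * s j) + 1 := by
        rcases cs.length_mul_simple w j with h | h <;> omega
      have hmem' : w * s j ∈ cs.doset I u J := by
        obtain ⟨a, ha, b, hb, rfl⟩ := hmem
        exact ⟨a, ha, b * s j, mul_mem hb (cs.simple_mem_parab hjJ), by group⟩
      have hts := ih (ℓ (w * s j)) (by omega) (w * s j) rfl hmem'
      refine Relation.ReflTransGen.tail hts ⟨hcover, Or.inr ⟨j, ?_⟩⟩
      rw [mul_inv_rev, cs.inv_simple]
      group
    · push_neg at hL hR
      have hwmin : cs.isMinRep I w J := ⟨hL, hR⟩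
      have heq := cs.minRep_unique hu hwmin hmem
      rw [heq]
      exact Relation.ReflTransGen.refl

end CoxeterSystem

/-- If `(I,u,J) ≤ (I',v,J')` in the two-sided Coxeter complex `Ξ`, then
`u ≤ v` in the two-sided weak order. -/
theorem xiLE_imp_tsLE (cs : CoxeterSystem M W) (F G : Set B × W × Set B)
    (hF : cs.inXi F) (hG : cs.inXi G) (h : cs.xiLE F G) :
    cs.tsLE F.2.1 G.2.1 := by
  have hvmem : G.2.1 ∈ cs.doset F.1 F.2.1 F.2.2 := by
    apply h.2.2
    exact ⟨1, one_mem _, 1, one_mem _, by group⟩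
  exact cs.tsLE_of_mem_doset hF (cs.length G.2.1) G.2.1 rfl hvmem
end
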